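/- Let d ≥ 2 be an integer and ρ > 0. Define the strip W_ρ = {(ω₁, ω₂) ∈ ℝ^{2d} : |ω₁ − ω₂| ≤ ρ}, where points of ℝ^{2d} are written as (ω₁, ω₂) with ω₁, ω₂ ∈ ℝ^d. Then the (2d−1)-dimensional Hausdorff measure of 𝕊₁^{2d-1} ∩ W_ρ is at most C min{1, ρ^{(d-1)/2}} for a constant C > 0 depending only on d. -/

import Mathlib

open MeasureTheory

/-- First component `ω₁` of a point of ℝ^{2d} = ℝ^d × ℝ^d. -/
noncomputable def projL {d : ℕ} (p : EuclideanSpace ℝ (Fin d ⊕ Fin d)) :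
    EuclideanSpace ℝ (Fin d) := WithLp.toLp 2 (fun i => p (Sum.inl i))

/-- Second component `ω₂` of a point of ℝ^{2d} = ℝ^d × ℝ^d. -/
noncomputable def projR {d : ℕ} (p : EuclideanSpace ℝ (Fin d ⊕ Fin d)) :
    EuclideanSpace ℝ (Fin d) := WithLp.toLp 2 (fun i => p (Sum.inr i))

open Set
open scoped ENNReal NNReal


lemma abs_sqrt_sub_sqrt {a b m : ℝ} (hm : 0 < m) (ha : m ≤ a) (hb : m ≤ b) :
    |Real.sqrt a - Real.sqrt b| ≤ |a - b| / (2 * Real.sqrt m) := by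
  have hsm : 0 < Real.sqrt m := Real.sqrt_pos.2 hm
  rw [le_div_iff₀ (by positivity)]
  have ha' : Real.sqrt m ≤ Real.sqrt a := Real.sqrt_le_sqrt ha
  have hb' : Real.sqrt m ≤ Real.sqrt b := Real.sqrt_le_sqrt hb
  have h1 : a - b = (Real.sqrt a - Real.sqrt b) * (Real.sqrt a + Real.sqrt b) := by
    have h2 : Real.sqrt a ^ 2 = a := Real.sq_sqrt (hm.le.trans ha)
    have h3 : Real.sqrt b ^ 2 = b := Real.sq_sqrt (hm.le.trans hb)
    nlinarith
  calc |Real.sqrt a - Real.sqrt b| * (2 * Real.sqrt m)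
      ≤ |Real.sqrt a - Real.sqrt b| * (Real.sqrt a + Real.sqrt b) := by
        apply mul_le_mul_of_nonneg_left (by linarith) (abs_nonneg _)
    _ = |a - b| := by
        rw [h1, abs_mul]
        congr 1
        exact (abs_of_nonneg (by positivity)).symm

lemma sum_sq_lip {α : Type*} [Fintype α] {x y : α → ℝ} {t : ℝ} (ht : 0 ≤ t)
    (hx : ∀ a, |x a| ≤ 1) (hy : ∀ a, |y a| ≤ 1) (h : ∀ a, |x a - y a| ≤ t) :
    |∑ a, x a ^ 2 - ∑ a, y a ^ 2| ≤ 2 * Fintype.card α * t := by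
  calc |∑ a, x a ^ 2 - ∑ a, y a ^ 2| = |∑ a, (x a ^ 2 - y a ^ 2)| := by
        rw [Finset.sum_sub_distrib]
    _ ≤ ∑ a, |x a ^ 2 - y a ^ 2| := Finset.abs_sum_le_sum_abs _ _
    _ ≤ ∑ _a : α, 2 * t := by
        apply Finset.sum_le_sum
        intro a _
        have h1 : x a ^ 2 - y a ^ 2 = (x a - y a) * (x a + y a) := by ring
        rw [h1, abs_mul]
        have h2 : |x a + y a| ≤ 2 := by
          have := abs_add_le (x a) (y a); have := hx a; have := hy a; linarith
        calc |x a - y a| * |x a + y a| ≤ t * 2 :=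
              mul_le_mul (h a) h2 (abs_nonneg _) ht
          _ = 2 * t := by ring
    _ = 2 * Fintype.card α * t := by
        rw [Finset.sum_const]; simp [Finset.card_univ]; ring

/-- Generic chart bound: a coordinatewise-Lipschitz map from a pi space
bounds Hausdorff measure of the image by volume of the domain. -/
lemma chart_measure_le {ι κ : Type*} [Fintype ι] [Fintype κ]
    (f : (ι → ℝ) → EuclideanSpace ℝ κ) (D : Set (ι → ℝ)) (L : ℝ≥0)
    (hL : ∀ x ∈ D, ∀ y ∈ D, ∀ c, |f x c - f y c| ≤ (L : ℝ) * dist x y) :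
    μH[(Fintype.card ι : ℝ)] (f '' D) ≤
      ((NNReal.sqrt (Fintype.card κ) * L : ℝ≥0) : ℝ≥0∞) ^ (Fintype.card ι : ℝ) * volume D := by
  have hlip : LipschitzOnWith (NNReal.sqrt (Fintype.card κ) * L) f D := by
    rw [lipschitzOnWith_iff_dist_le_mul]
    intro x hx y hy
    rw [EuclideanSpace.dist_eq]
    have key : ∑ c, dist (f x c) (f y c) ^ 2 ≤ (Fintype.card κ) * ((L : ℝ) * dist x y) ^ 2 := by
      calc ∑ c, dist (f x c) (f y c) ^ 2 ≤ ∑ _c : κ, ((L : ℝ) * dist x y) ^ 2 := by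
            apply Finset.sum_le_sum
            intro c _
            have h1 : dist (f x c) (f y c) = |f x c - f y c| := by
              rw [Real.dist_eq]
            rw [h1]
            have := hL x hx y hy c
            have h0 : (0:ℝ) ≤ |f x c - f y c| := abs_nonneg _
            nlinarith
        _ = (Fintype.card κ) * ((L : ℝ) * dist x y) ^ 2 := by
            rw [Finset.sum_const]; simp [Finset.card_univ]
    calc Real.sqrt (∑ c, dist (f x c) (f y c) ^ 2)
        ≤ Real.sqrt ((Fintype.card κ) * ((L : ℝ) * dist x y) ^ 2) := Real.sqrt_le_sqrt key
      _ = Real.sqrt (Fintype.card κ) * ((L : ℝ) * dist x y) := by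
          rw [Real.sqrt_mul (by positivity), Real.sqrt_sq (by positivity)]
      _ = ↑(NNReal.sqrt (Fintype.card κ) * L) * dist x y := by
          rw [NNReal.coe_mul, Real.coe_sqrt]
          push_cast
          ring
  have h2 := hlip.hausdorffMeasure_image_le (d := (Fintype.card ι : ℝ)) (by positivity)
  calc μH[(Fintype.card ι : ℝ)] (f '' D)
      ≤ ((NNReal.sqrt (Fintype.card κ) * L : ℝ≥0) : ℝ≥0∞) ^ (Fintype.card ι : ℝ) *
          μH[(Fintype.card ι : ℝ)] D := h2
    _ = _ := by rw [hausdorffMeasure_pi_real]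


-- small helper: |x| ≤ 1 from x^2 ≤ 1
lemma abs_le_one_of_sq_le_one {x : ℝ} (h : x ^ 2 ≤ 1) : |x| ≤ 1 := by
  nlinarith [abs_nonneg x, sq_abs x]

-- helper: each coordinate bounded in the chart domain
lemma coord_bound {α : Type*} [Fintype α] {x : α → ℝ} {B : ℝ} (hB : B ≤ 1)
    (h : ∑ a, x a ^ 2 ≤ B) (a : α) : |x a| ≤ 1 := by
  apply abs_le_one_of_sq_le_one
  calc x a ^ 2 ≤ ∑ a', x a' ^ 2 :=
        Finset.single_le_sum (fun a' _ => sq_nonneg (x a')) (Finset.mem_univ a)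
    _ ≤ 1 := h.trans hB

noncomputable def chartG {κ : Type*} [Fintype κ] [DecidableEq κ] (c : κ) (ε : ℝ)
    (x : {c' : κ // c' ≠ c} → ℝ) : EuclideanSpace ℝ κ :=
  WithLp.toLp 2 (fun c' => if h : c' = c then ε * Real.sqrt (1 - ∑ k, x k ^ 2) else x ⟨c', h⟩)

lemma sphere_subset_charts {κ : Type*} [Fintype κ] [DecidableEq κ] [Nonempty κ] :
    (Metric.sphere (0 : EuclideanSpace ℝ κ) 1) ⊆
      ⋃ (c : κ) (b : Bool), chartG c (if b then (1:ℝ) else -1) ''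
        {x | ∑ k, x k ^ 2 ≤ 1 - 1 / (Fintype.card κ)} := by
  intro p hp
  have hn : (0:ℝ) < Fintype.card κ := by
    exact_mod_cast Fintype.card_pos
  have hnorm : ‖p‖ = 1 := by simpa using hp
  have hsum : ∑ c, p c ^ 2 = 1 := by
    have h2' := EuclideanSpace.norm_eq p
    simp only [Real.norm_eq_abs, sq_abs] at h2'
    rw [hnorm] at h2'
    have h2 : Real.sqrt (∑ c, p c ^ 2) = 1 := h2'.symm
    have h3 : (0:ℝ) ≤ ∑ c, p c ^ 2 := Finset.sum_nonneg fun c _ => sq_nonneg _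
    nlinarith [Real.sq_sqrt h3]
  obtain ⟨c, -, hc⟩ := Finset.exists_max_image Finset.univ (fun c => |p c|) ⟨Classical.arbitrary κ, Finset.mem_univ _⟩
  have hc' : ∀ c', p c' ^ 2 ≤ p c ^ 2 := by
    intro c'
    have := hc c' (Finset.mem_univ c')
    nlinarith [abs_nonneg (p c'), sq_abs (p c'), sq_abs (p c)]
  have hmax : 1 / (Fintype.card κ) ≤ p c ^ 2 := by
    have h1 : ∑ c', p c' ^ 2 ≤ (Fintype.card κ) * p c ^ 2 := by
      calc ∑ c', p c' ^ 2 ≤ ∑ _c' : κ, p c ^ 2 := Finset.sum_le_sum fun c' _ => hc' c'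
        _ = (Fintype.card κ) * p c ^ 2 := by rw [Finset.sum_const]; simp [Finset.card_univ]
    rw [div_le_iff₀ hn]
    nlinarith [h1, hsum]
  set x : {c' : κ // c' ≠ c} → ℝ := fun k => p k.1 with hx
  have hsplit : ∑ k, x k ^ 2 = 1 - p c ^ 2 := by
    have h1 : ∑ c' ∈ Finset.univ.erase c, p c' ^ 2 = ∑ k : {c' : κ // c' ≠ c}, (p k.1) ^ 2 :=
      Finset.sum_subtype _ (fun c' => by simp [Finset.mem_erase]) _
    have h2 : ∑ c' ∈ Finset.univ.erase c, p c' ^ 2 + p c ^ 2 = ∑ c', p c' ^ 2 :=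
      Finset.sum_erase_add _ _ (Finset.mem_univ c)
    rw [hx]
    simp only [← h1]
    linarith [hsum, h2]
  refine Set.mem_iUnion.2 ⟨c, Set.mem_iUnion.2 ⟨decide (0 ≤ p c), ⟨x, ?_, ?_⟩⟩⟩
  · show ∑ k, x k ^ 2 ≤ 1 - 1 / (Fintype.card κ)
    rw [hsplit]; linarith
  · ext c'
    by_cases h : c' = c
    · subst h
      simp only [chartG, PiLp.toLp_apply, dif_pos rfl, hsplit]
      have h4 : (1 : ℝ) - (1 - p c' ^ 2) = p c' ^ 2 := by ring
      rw [h4, Real.sqrt_sq_eq_abs]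
      by_cases hpc : 0 ≤ p c'
      · simp [hpc, abs_of_nonneg hpc]
      · simp [hpc, abs_of_neg (lt_of_not_ge hpc)]
    · simp [chartG, h, hx]


-- generic sqrt-difference Lipschitz step used in both charts:
-- if q q' are "sum of squares" values with q,q' ≤ 1 - m then |√(1-q) - √(1-q')| ≤ (n/2) |q-q'| when √m ≥ 1/n ... we inline instead.
lemma sqrt_one_sub_lip {q q' m : ℝ} (hm : 0 < m) (hm1 : m ≤ 1) (hq : q ≤ 1 - m) (hq' : q' ≤ 1 - m)
    {n : ℝ} (hn : 1 / n ≤ m) (hn0 : 0 < n) :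
    |Real.sqrt (1 - q) - Real.sqrt (1 - q')| ≤ (n / 2) * |q - q'| := by
  have h1 : |Real.sqrt (1 - q) - Real.sqrt (1 - q')| ≤ |(1 - q) - (1 - q')| / (2 * Real.sqrt m) :=
    abs_sqrt_sub_sqrt hm (by linarith) (by linarith)
  have h2 : |(1 - q) - (1 - q')| = |q - q'| := by
    rw [show (1 - q) - (1 - q') = -(q - q') by ring, abs_neg]
  rw [h2] at h1
  have hs : 1 / n ≤ Real.sqrt m := by
    rw [show (1:ℝ)/n = Real.sqrt ((1/n)^2) from (Real.sqrt_sq (by positivity)).symm]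
    apply Real.sqrt_le_sqrt
    have h3 : (1:ℝ)/n ≤ 1 := hn.trans hm1
    have h4 : (0:ℝ) ≤ (1 - 1/n) * (1/n) :=
      mul_nonneg (by linarith) (le_of_lt (div_pos one_pos hn0))
    nlinarith [hn]
  have hspos : 0 < Real.sqrt m := Real.sqrt_pos.2 hm
  calc |Real.sqrt (1 - q) - Real.sqrt (1 - q')| ≤ |q - q'| / (2 * Real.sqrt m) := h1
    _ ≤ |q - q'| / (2 * (1/n)) := by
        apply div_le_div_of_nonneg_left (abs_nonneg _) (by positivity) (by linarith)
    _ = (n / 2) * |q - q'| := by field_simp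

lemma chartG_lip {κ : Type*} [Fintype κ] [DecidableEq κ] [Nonempty κ] (c : κ) (ε : ℝ)
    (hε : |ε| = 1) :
    ∀ x ∈ {x : {c' : κ // c' ≠ c} → ℝ | ∑ k, x k ^ 2 ≤ 1 - 1 / (Fintype.card κ)},
    ∀ y ∈ {x : {c' : κ // c' ≠ c} → ℝ | ∑ k, x k ^ 2 ≤ 1 - 1 / (Fintype.card κ)},
    ∀ c', |chartG c ε x c' - chartG c ε y c'| ≤
      ((((Fintype.card κ : ℝ≥0)) ^ 2 : ℝ≥0) : ℝ) * dist x y := by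
  intro x hx y hy c'
  have hn1 : (1:ℝ) ≤ (Fintype.card κ : ℝ) := by exact_mod_cast Fintype.card_pos
  set n : ℝ := (Fintype.card κ : ℝ) with hn
  have hn0 : (0:ℝ) < n := by linarith
  have ht : 0 ≤ dist x y := dist_nonneg
  have hcoord : ∀ k, |x k - y k| ≤ dist x y := fun k => by
    simpa [Real.dist_eq] using dist_le_pi_dist x y k
  have hBle : 1 - 1/n ≤ (1:ℝ) := by
    have : (0:ℝ) < 1/n := by positivity
    linarith
  have hxs : ∑ k, x k ^ 2 ≤ 1 - 1/n := hx
  have hys : ∑ k, y k ^ 2 ≤ 1 - 1/n := hy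
  have hxb : ∀ k, |x k| ≤ 1 := coord_bound hBle hxs
  have hyb : ∀ k, |y k| ≤ 1 := coord_bound hBle hys
  have hcast : ((((Fintype.card κ : ℝ≥0)) ^ 2 : ℝ≥0) : ℝ) = n ^ 2 := by
    push_cast; rfl
  rw [hcast]
  by_cases h : c' = c
  · simp only [chartG, PiLp.toLp_apply, dif_pos h]
    rw [show ε * Real.sqrt (1 - ∑ k, x k ^ 2) - ε * Real.sqrt (1 - ∑ k, y k ^ 2)
        = ε * (Real.sqrt (1 - ∑ k, x k ^ 2) - Real.sqrt (1 - ∑ k, y k ^ 2)) by ring,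
      abs_mul, hε, one_mul]
    have hsq := sqrt_one_sub_lip (m := 1/n) (by positivity) (by rw [div_le_one hn0]; exact hn1) hxs hys
      (n := n) le_rfl hn0
    have hcardle : (Fintype.card {c' : κ // c' ≠ c} : ℝ) ≤ n := by
      rw [hn]; exact_mod_cast Fintype.card_subtype_le _
    have hsum := sum_sq_lip ht hxb hyb hcoord
    calc |Real.sqrt (1 - ∑ k, x k ^ 2) - Real.sqrt (1 - ∑ k, y k ^ 2)|
        ≤ (n / 2) * |∑ k, x k ^ 2 - ∑ k, y k ^ 2| := hsq
      _ ≤ (n / 2) * (2 * n * dist x y) := by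
          apply mul_le_mul_of_nonneg_left _ (by linarith)
          calc |∑ k, x k ^ 2 - ∑ k, y k ^ 2|
              ≤ 2 * (Fintype.card {c' : κ // c' ≠ c}) * dist x y := hsum
            _ ≤ 2 * n * dist x y := by nlinarith [hcardle, ht]
      _ = n ^ 2 * dist x y := by ring
  · simp only [chartG, PiLp.toLp_apply, dif_neg h]
    have h1 : (1:ℝ) ≤ n ^ 2 := by nlinarith
    calc |x ⟨c', h⟩ - y ⟨c', h⟩| ≤ dist x y := hcoord _
      _ ≤ n ^ 2 * dist x y := le_mul_of_one_le_left ht h1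

lemma sphere_measure_fin {κ : Type*} [Fintype κ] [DecidableEq κ] [Nonempty κ] :
    ∃ M : ℝ≥0∞, M ≠ ⊤ ∧
      μH[((Fintype.card κ - 1 : ℕ) : ℝ)] (Metric.sphere (0 : EuclideanSpace ℝ κ) 1) ≤ M := by
  classical
  set n := Fintype.card κ with hn
  set L : ℝ≥0 := ((n : ℝ≥0)) ^ 2 with hL
  set K : ℝ≥0 := NNReal.sqrt n * L with hK
  set B : ℝ≥0∞ := (K : ℝ≥0∞) ^ ((n - 1 : ℕ) : ℝ) * ENNReal.ofReal 2 ^ (n - 1) with hB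
  have hBfin : B ≠ ⊤ := by
    apply ENNReal.mul_ne_top
    · exact ENNReal.rpow_ne_top_of_nonneg (by positivity) ENNReal.coe_ne_top
    · exact ENNReal.pow_ne_top ENNReal.ofReal_ne_top
  refine ⟨(n : ℝ≥0∞) * (2 * B), ?_, ?_⟩
  · exact ENNReal.mul_ne_top (ENNReal.natCast_ne_top n)
      (ENNReal.mul_ne_top (by norm_num) hBfin)
  have hchart : ∀ (c : κ) (b : Bool),
      μH[((n - 1 : ℕ) : ℝ)] (chartG c (if b then (1:ℝ) else -1) ''
        {x : {c' : κ // c' ≠ c} → ℝ | ∑ k, x k ^ 2 ≤ 1 - 1 / (Fintype.card κ)}) ≤ B := by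
    intro c b
    have hcard : Fintype.card {c' : κ // c' ≠ c} = n - 1 := by
      simp [Fintype.card_subtype_compl, Fintype.card_subtype_eq]; rfl
    have hε : |if b then (1:ℝ) else -1| = 1 := by cases b <;> simp
    have hmain := chart_measure_le (chartG c (if b then (1:ℝ) else -1))
      {x : {c' : κ // c' ≠ c} → ℝ | ∑ k, x k ^ 2 ≤ 1 - 1 / (Fintype.card κ)}
      L (chartG_lip c _ hε)
    rw [hcard] at hmain
    refine hmain.trans ?_
    rw [hB]
    apply mul_le_mul'
    · rfl
    -- volume of domain ≤ volume of box
    have hBle : 1 - 1/(Fintype.card κ : ℝ) ≤ (1:ℝ) := by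
      have hn1 : (1:ℝ) ≤ (Fintype.card κ : ℝ) := by exact_mod_cast Fintype.card_pos
      have : (0:ℝ) < 1/(Fintype.card κ : ℝ) := by positivity
      linarith
    have hsub : {x : {c' : κ // c' ≠ c} → ℝ | ∑ k, x k ^ 2 ≤ 1 - 1 / (Fintype.card κ)} ⊆
        Set.pi univ (fun _ => Icc (-1:ℝ) 1) := by
      intro x hx k _
      have := coord_bound hBle hx k
      rw [mem_Icc]
      exact abs_le.1 this
    calc volume {x : {c' : κ // c' ≠ c} → ℝ | ∑ k, x k ^ 2 ≤ 1 - 1 / (Fintype.card κ)}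
        ≤ volume (Set.pi univ (fun _ : {c' : κ // c' ≠ c} => Icc (-1:ℝ) 1)) :=
          measure_mono hsub
      _ = ENNReal.ofReal 2 ^ (n - 1) := by
          rw [volume_pi_pi]
          simp [Real.volume_Icc, hcard]
          norm_num
  calc μH[((n - 1 : ℕ) : ℝ)] (Metric.sphere (0 : EuclideanSpace ℝ κ) 1)
      ≤ μH[((n - 1 : ℕ) : ℝ)] (⋃ (c : κ) (b : Bool), chartG c (if b then (1:ℝ) else -1) ''
          {x : {c' : κ // c' ≠ c} → ℝ | ∑ k, x k ^ 2 ≤ 1 - 1 / (Fintype.card κ)}) :=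
        measure_mono sphere_subset_charts
    _ ≤ ∑' c : κ, μH[((n - 1 : ℕ) : ℝ)] (⋃ b : Bool, chartG c (if b then (1:ℝ) else -1) ''
          {x : {c' : κ // c' ≠ c} → ℝ | ∑ k, x k ^ 2 ≤ 1 - 1 / (Fintype.card κ)}) :=
        measure_iUnion_le _
    _ ≤ ∑' c : κ, ∑' b : Bool, μH[((n - 1 : ℕ) : ℝ)] (chartG c (if b then (1:ℝ) else -1) ''
          {x : {c' : κ // c' ≠ c} → ℝ | ∑ k, x k ^ 2 ≤ 1 - 1 / (Fintype.card κ)}) :=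
        ENNReal.tsum_le_tsum fun c => measure_iUnion_le _
    _ ≤ ∑' _c : κ, ∑' _b : Bool, B :=
        ENNReal.tsum_le_tsum fun c => ENNReal.tsum_le_tsum fun b => hchart c b
    _ = (n : ℝ≥0∞) * (2 * B) := by
        simp [tsum_fintype, Finset.sum_const, Finset.card_univ]; rfl



/-- sign part of the band chart. -/
noncomputable def thetaF (d : ℕ) (i : Fin d) (ε : ℝ)
    (x : (Fin d ⊕ {j : Fin d // j ≠ i}) → ℝ) (j : Fin d) : ℝ :=
  if h : j = i then ε * Real.sqrt (1 - ∑ k, x (Sum.inr k) ^ 2) else x (Sum.inr ⟨j, h⟩)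

/-- band chart -/
noncomputable def chartF (d : ℕ) (i : Fin d) (ε : ℝ)
    (x : (Fin d ⊕ {j : Fin d // j ≠ i}) → ℝ) : EuclideanSpace ℝ (Fin d ⊕ Fin d) :=
  WithLp.toLp 2 fun c =>
    Sum.rec (motive := fun _ => ℝ)
      (fun j => (Real.sqrt (1 - ∑ j', x (Sum.inl j') ^ 2) * thetaF d i ε x j + x (Sum.inl j)) /
        Real.sqrt 2)
      (fun j => (Real.sqrt (1 - ∑ j', x (Sum.inl j') ^ 2) * thetaF d i ε x j - x (Sum.inl j)) /
        Real.sqrt 2) c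

def bandDom (d : ℕ) (i : Fin d) (ρ : ℝ) : Set ((Fin d ⊕ {j : Fin d // j ≠ i}) → ℝ) :=
  {x | ∑ j, x (Sum.inl j) ^ 2 ≤ ρ ^ 2 / 2 ∧ ∑ k, x (Sum.inr k) ^ 2 ≤ 1 - 1 / d}

lemma band_subset_charts (d : ℕ) (hd : 2 ≤ d) (ρ : ℝ) (hρ0 : 0 < ρ) (hρ1 : ρ ≤ 1) :
    (Metric.sphere (0 : EuclideanSpace ℝ (Fin d ⊕ Fin d)) 1 ∩
        {p | ‖projL p - projR p‖ ≤ ρ}) ⊆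
      ⋃ (i : Fin d) (b : Bool), chartF d i (if b then (1:ℝ) else -1) '' bandDom d i ρ := by
  have hd0 : (0:ℝ) < d := by exact_mod_cast Nat.lt_of_lt_of_le Nat.zero_lt_two hd
  intro p hp
  obtain ⟨hps, hpw⟩ := hp
  have h2 : Real.sqrt 2 * Real.sqrt 2 = 2 := Real.mul_self_sqrt (by norm_num)
  have h2' : Real.sqrt 2 ^ 2 = 2 := Real.sq_sqrt (by norm_num)
  have hnorm : ‖p‖ = 1 := by simpa using hps
  have hsum : ∑ c, p c ^ 2 = 1 := by
    have he := EuclideanSpace.norm_eq p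
    simp only [Real.norm_eq_abs, sq_abs] at he
    rw [hnorm] at he
    have h3 : (0:ℝ) ≤ ∑ c, p c ^ 2 := Finset.sum_nonneg fun c _ => sq_nonneg _
    nlinarith [Real.sq_sqrt h3, he.symm]
  set u : Fin d → ℝ := fun j => (p (Sum.inl j) - p (Sum.inr j)) / Real.sqrt 2 with hu
  set v : Fin d → ℝ := fun j => (p (Sum.inl j) + p (Sum.inr j)) / Real.sqrt 2 with hv
  have hsplit : ∑ j, u j ^ 2 + ∑ j, v j ^ 2 = 1 := by
    have h1 : ∀ j, u j ^ 2 + v j ^ 2 = p (Sum.inl j) ^ 2 + p (Sum.inr j) ^ 2 := by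
      intro j
      rw [hu, hv]
      simp only []
      rw [div_pow, div_pow, h2']
      ring
    calc ∑ j, u j ^ 2 + ∑ j, v j ^ 2 = ∑ j, (u j ^ 2 + v j ^ 2) := by
          rw [Finset.sum_add_distrib]
      _ = ∑ j, (p (Sum.inl j) ^ 2 + p (Sum.inr j) ^ 2) := Finset.sum_congr rfl fun j _ => h1 j
      _ = ∑ c, p c ^ 2 := by
          rw [Fintype.sum_sum_type, Finset.sum_add_distrib]
      _ = 1 := hsum
  have hdiffsq : ∑ j, (p (Sum.inl j) - p (Sum.inr j)) ^ 2 ≤ ρ ^ 2 := by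
    have he := EuclideanSpace.norm_eq (projL p - projR p)
    simp only [Real.norm_eq_abs, sq_abs] at he
    have happ : ∀ j, (projL p - projR p) j = p (Sum.inl j) - p (Sum.inr j) := fun j => rfl
    simp only [happ] at he
    have h3 : (0:ℝ) ≤ ∑ j, (p (Sum.inl j) - p (Sum.inr j)) ^ 2 :=
      Finset.sum_nonneg fun j _ => sq_nonneg _
    have h4 : Real.sqrt (∑ j, (p (Sum.inl j) - p (Sum.inr j)) ^ 2) ≤ ρ := by
      rw [← he]; exact hpw
    nlinarith [Real.sq_sqrt h3, Real.sqrt_nonneg (∑ j, (p (Sum.inl j) - p (Sum.inr j)) ^ 2)]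
  have hq : ∑ j, u j ^ 2 ≤ ρ ^ 2 / 2 := by
    have h1 : ∀ j, u j ^ 2 = (p (Sum.inl j) - p (Sum.inr j)) ^ 2 / 2 := by
      intro j; rw [hu]; simp only []; rw [div_pow, h2']
    calc ∑ j, u j ^ 2 = (∑ j, (p (Sum.inl j) - p (Sum.inr j)) ^ 2) / 2 := by
          rw [Finset.sum_div]; exact Finset.sum_congr rfl fun j _ => h1 j
      _ ≤ ρ ^ 2 / 2 := by linarith
  have hqhalf : ∑ j, u j ^ 2 ≤ 1 / 2 := by nlinarith
  have hvsum : ∑ j, v j ^ 2 = 1 - ∑ j, u j ^ 2 := by linarith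
  set s : ℝ := Real.sqrt (1 - ∑ j, u j ^ 2) with hs
  have hs2 : s ^ 2 = 1 - ∑ j, u j ^ 2 := Real.sq_sqrt (by linarith)
  have hspos : 0 < s := Real.sqrt_pos.2 (by linarith)
  set θ : Fin d → ℝ := fun j => v j / s with hθ
  have hθsum : ∑ j, θ j ^ 2 = 1 := by
    rw [hθ]
    simp only [div_pow]
    rw [← Finset.sum_div, hvsum, ← hs2, div_self (by positivity)]
  have : Nonempty (Fin d) := ⟨⟨0, by omega⟩⟩
  obtain ⟨i, -, hi⟩ := Finset.exists_max_image Finset.univ (fun j => |θ j|)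
    ⟨Classical.arbitrary (Fin d), Finset.mem_univ _⟩
  have hθc' : ∀ j, θ j ^ 2 ≤ θ i ^ 2 := by
    intro j
    have := hi j (Finset.mem_univ j)
    nlinarith [abs_nonneg (θ j), sq_abs (θ j), sq_abs (θ i)]
  have hθi : 1 / (d:ℝ) ≤ θ i ^ 2 := by
    have h1 : ∑ j, θ j ^ 2 ≤ (d:ℝ) * θ i ^ 2 := by
      calc ∑ j, θ j ^ 2 ≤ ∑ _j : Fin d, θ i ^ 2 := Finset.sum_le_sum fun j _ => hθc' j
        _ = (d:ℝ) * θ i ^ 2 := by rw [Finset.sum_const]; simp [Finset.card_univ]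
    rw [div_le_iff₀ hd0]
    nlinarith [h1, hθsum]
  have hrest : ∑ k : {j : Fin d // j ≠ i}, θ k.1 ^ 2 = 1 - θ i ^ 2 := by
    have h1 : ∑ j ∈ Finset.univ.erase i, θ j ^ 2 = ∑ k : {j : Fin d // j ≠ i}, θ k.1 ^ 2 :=
      Finset.sum_subtype _ (fun j => by simp [Finset.mem_erase]) _
    have h2'' : ∑ j ∈ Finset.univ.erase i, θ j ^ 2 + θ i ^ 2 = ∑ j, θ j ^ 2 :=
      Finset.sum_erase_add _ _ (Finset.mem_univ i)
    rw [← h1]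
    linarith [hθsum, h2'']
  set x : (Fin d ⊕ {j : Fin d // j ≠ i}) → ℝ := Sum.elim u (fun k => θ k.1) with hx
  have hmem : x ∈ bandDom d i ρ := by
    constructor
    · exact hq
    · show ∑ k : {j : Fin d // j ≠ i}, x (Sum.inr k) ^ 2 ≤ 1 - 1 / (d:ℝ)
      have : ∑ k : {j : Fin d // j ≠ i}, x (Sum.inr k) ^ 2
          = ∑ k : {j : Fin d // j ≠ i}, θ k.1 ^ 2 := rfl
      rw [this, hrest]
      linarith
  refine Set.mem_iUnion.2 ⟨i, Set.mem_iUnion.2 ⟨decide (0 ≤ θ i), ⟨x, hmem, ?_⟩⟩⟩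
  set ε : ℝ := if decide (0 ≤ θ i) then (1:ℝ) else -1 with hε
  have hxinl : ∀ j, x (Sum.inl j) = u j := fun j => rfl
  have hsx : Real.sqrt (1 - ∑ j', x (Sum.inl j') ^ 2) = s := by
    rw [hs]
    congr 1
  have hθF : ∀ j, thetaF d i ε x j = θ j := by
    intro j
    unfold thetaF
    by_cases hj : j = i
    · subst hj
      rw [dif_pos rfl]
      have hk : ∑ k : {j' : Fin d // j' ≠ j}, x (Sum.inr k) ^ 2 = 1 - θ j ^ 2 := hrest
      rw [hk]
      have h5 : (1:ℝ) - (1 - θ j ^ 2) = θ j ^ 2 := by ring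
      rw [h5, Real.sqrt_sq_eq_abs]
      by_cases hpos : 0 ≤ θ j
      · rw [hε]; simp [hpos, abs_of_nonneg hpos]
      · rw [hε]; simp [hpos, abs_of_neg (lt_of_not_ge hpos)]
    · rw [dif_neg hj]
      rfl
  have hsθ : ∀ j, s * θ j = v j := by
    intro j
    rw [hθ]
    field_simp
  have key1 : ∀ a b : ℝ, ((a+b)/Real.sqrt 2 + (a-b)/Real.sqrt 2)/Real.sqrt 2 = a := by
    intro a b; rw [← add_div, div_div, h2]; ring
  have key2 : ∀ a b : ℝ, ((a+b)/Real.sqrt 2 - (a-b)/Real.sqrt 2)/Real.sqrt 2 = b := by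
    intro a b; rw [div_sub_div_same, div_div, h2]; ring
  ext c
  rcases c with j | j
  · show (Real.sqrt (1 - ∑ j', x (Sum.inl j') ^ 2) * thetaF d i ε x j + x (Sum.inl j)) /
        Real.sqrt 2 = p (Sum.inl j)
    rw [hsx, hθF j, hsθ j, hxinl j, hu, hv]
    simp only []
    exact key1 _ _
  · show (Real.sqrt (1 - ∑ j', x (Sum.inl j') ^ 2) * thetaF d i ε x j - x (Sum.inl j)) /
        Real.sqrt 2 = p (Sum.inr j)
    rw [hsx, hθF j, hsθ j, hxinl j, hu, hv]
    simp only []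
    exact key2 _ _

lemma chartF_lip (d : ℕ) (hd : 2 ≤ d) (i : Fin d) (ε : ℝ) (hε : |ε| = 1)
    (ρ : ℝ) (hρ0 : 0 < ρ) (hρ1 : ρ ≤ 1) :
    ∀ x ∈ bandDom d i ρ, ∀ y ∈ bandDom d i ρ, ∀ c,
      |chartF d i ε x c - chartF d i ε y c| ≤ ((3 * (d:ℝ≥0)^2 : ℝ≥0) : ℝ) * dist x y := by
  intro x hx y hy c
  have hd0 : (0:ℝ) < d := by exact_mod_cast Nat.lt_of_lt_of_le Nat.zero_lt_two hd
  have hd1 : (1:ℝ) ≤ d := by exact_mod_cast Nat.one_le_of_lt (Nat.lt_of_lt_of_le Nat.one_lt_two hd)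
  have hd2 : (2:ℝ) ≤ d := by exact_mod_cast hd
  set t := dist x y with htdef
  have ht : 0 ≤ t := dist_nonneg
  have hcast : ((3 * (d:ℝ≥0)^2 : ℝ≥0) : ℝ) = 3 * (d:ℝ)^2 := by push_cast; rfl
  rw [hcast]
  obtain ⟨hx1, hx2⟩ := hx
  obtain ⟨hy1, hy2⟩ := hy
  have hcoordl : ∀ j, |x (Sum.inl j) - y (Sum.inl j)| ≤ t := fun j => by
    simpa [Real.dist_eq] using dist_le_pi_dist x y (Sum.inl j)
  have hcoordr : ∀ k, |x (Sum.inr k) - y (Sum.inr k)| ≤ t := fun k => by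
    simpa [Real.dist_eq] using dist_le_pi_dist x y (Sum.inr k)
  have hρsq : ρ ^ 2 / 2 ≤ 1 / 2 := by nlinarith
  -- bounds on individual coordinates
  have hxbl : ∀ j, |x (Sum.inl j)| ≤ 1 :=
    coord_bound (x := fun j => x (Sum.inl j)) (by linarith : ρ^2/2 ≤ (1:ℝ)) hx1
  have hybl : ∀ j, |y (Sum.inl j)| ≤ 1 :=
    coord_bound (x := fun j => y (Sum.inl j)) (by linarith : ρ^2/2 ≤ (1:ℝ)) hy1
  have hBd : 1 - 1/(d:ℝ) ≤ 1 := by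
    have : (0:ℝ) < 1/d := by positivity
    linarith
  have hxbr : ∀ k, |x (Sum.inr k)| ≤ 1 :=
    coord_bound (x := fun k => x (Sum.inr k)) hBd hx2
  have hybr : ∀ k, |y (Sum.inr k)| ≤ 1 :=
    coord_bound (x := fun k => y (Sum.inr k)) hBd hy2
  -- Lipschitz of the sums of squares
  have hq_lip : |∑ j, x (Sum.inl j) ^ 2 - ∑ j, y (Sum.inl j) ^ 2| ≤ 2 * d * t := by
    have := sum_sq_lip ht hxbl hybl hcoordl
    simpa [Fintype.card_fin] using this
  have hcards : (Fintype.card {j : Fin d // j ≠ i} : ℝ) ≤ d := by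
    exact_mod_cast (Fintype.card_subtype_le _).trans (le_of_eq (Fintype.card_fin d))
  have hm_lip : |∑ k, x (Sum.inr k) ^ 2 - ∑ k, y (Sum.inr k) ^ 2| ≤ 2 * d * t := by
    have h1 := sum_sq_lip ht hxbr hybr hcoordr
    calc |∑ k, x (Sum.inr k) ^ 2 - ∑ k, y (Sum.inr k) ^ 2|
        ≤ 2 * (Fintype.card {j : Fin d // j ≠ i}) * t := h1
      _ ≤ 2 * d * t := by nlinarith [hcards, ht]
  -- Lipschitz of s = √(1 - q)
  have hs_lip : |Real.sqrt (1 - ∑ j, x (Sum.inl j) ^ 2) - Real.sqrt (1 - ∑ j, y (Sum.inl j) ^ 2)|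
      ≤ 2 * d * t := by
    have h1 := sqrt_one_sub_lip (m := 1/2) (by norm_num) (by norm_num)
      (by linarith : ∑ j, x (Sum.inl j) ^ 2 ≤ 1 - 1/2)
      (by linarith : ∑ j, y (Sum.inl j) ^ 2 ≤ 1 - 1/2)
      (n := 2) (by norm_num) (by norm_num)
    calc |Real.sqrt (1 - ∑ j, x (Sum.inl j) ^ 2) - Real.sqrt (1 - ∑ j, y (Sum.inl j) ^ 2)|
        ≤ (2/2) * |∑ j, x (Sum.inl j) ^ 2 - ∑ j, y (Sum.inl j) ^ 2| := h1
      _ ≤ 2 * d * t := by linarith [hq_lip, abs_nonneg (∑ j, x (Sum.inl j) ^ 2 - ∑ j, y (Sum.inl j) ^ 2)]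
  -- Lipschitz of θ
  have hθ_lip : ∀ j, |thetaF d i ε x j - thetaF d i ε y j| ≤ (d:ℝ)^2 * t := by
    intro j
    unfold thetaF
    by_cases hj : j = i
    · rw [dif_pos hj, dif_pos hj]
      rw [show ε * Real.sqrt (1 - ∑ k, x (Sum.inr k) ^ 2) -
          ε * Real.sqrt (1 - ∑ k, y (Sum.inr k) ^ 2)
        = ε * (Real.sqrt (1 - ∑ k, x (Sum.inr k) ^ 2) -
            Real.sqrt (1 - ∑ k, y (Sum.inr k) ^ 2)) by ring, abs_mul, hε, one_mul]
      have h1 := sqrt_one_sub_lip (m := 1/(d:ℝ)) (by positivity)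
        (by rw [div_le_one hd0]; exact hd1) hx2 hy2 (n := (d:ℝ)) le_rfl hd0
      calc |Real.sqrt (1 - ∑ k, x (Sum.inr k) ^ 2) - Real.sqrt (1 - ∑ k, y (Sum.inr k) ^ 2)|
          ≤ ((d:ℝ)/2) * |∑ k, x (Sum.inr k) ^ 2 - ∑ k, y (Sum.inr k) ^ 2| := h1
        _ ≤ ((d:ℝ)/2) * (2 * d * t) := by
            apply mul_le_mul_of_nonneg_left hm_lip (by positivity)
        _ = (d:ℝ)^2 * t := by ring
    · rw [dif_neg hj, dif_neg hj]
      calc |x (Sum.inr ⟨j, hj⟩) - y (Sum.inr ⟨j, hj⟩)| ≤ t := hcoordr _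
        _ ≤ (d:ℝ)^2 * t := le_mul_of_one_le_left ht (by nlinarith)
  -- boundedness of s and θ
  have hs_le : ∀ z : (Fin d ⊕ {j : Fin d // j ≠ i}) → ℝ, (∑ j, z (Sum.inl j) ^ 2 ≤ ρ^2/2) →
      |Real.sqrt (1 - ∑ j, z (Sum.inl j) ^ 2)| ≤ 1 := by
    intro z hz
    rw [abs_of_nonneg (Real.sqrt_nonneg _)]
    have h0 : (0:ℝ) ≤ ∑ j, z (Sum.inl j) ^ 2 := Finset.sum_nonneg fun j _ => sq_nonneg _
    calc Real.sqrt (1 - ∑ j, z (Sum.inl j) ^ 2) ≤ Real.sqrt 1 :=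
          Real.sqrt_le_sqrt (by linarith)
      _ = 1 := Real.sqrt_one
  have hθ_le : ∀ j, |thetaF d i ε y j| ≤ 1 := by
    intro j
    unfold thetaF
    by_cases hj : j = i
    · rw [dif_pos hj, abs_mul, hε, one_mul, abs_of_nonneg (Real.sqrt_nonneg _)]
      have h0 : (0:ℝ) ≤ ∑ k, y (Sum.inr k) ^ 2 := Finset.sum_nonneg fun k _ => sq_nonneg _
      calc Real.sqrt (1 - ∑ k, y (Sum.inr k) ^ 2) ≤ Real.sqrt 1 :=
            Real.sqrt_le_sqrt (by linarith)
        _ = 1 := Real.sqrt_one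
    · rw [dif_neg hj]; exact hybr _
  -- product bound
  have hprod : ∀ j, |Real.sqrt (1 - ∑ j', x (Sum.inl j') ^ 2) * thetaF d i ε x j -
      Real.sqrt (1 - ∑ j', y (Sum.inl j') ^ 2) * thetaF d i ε y j| ≤
      ((d:ℝ)^2 + 2*d) * t := by
    intro j
    set sx := Real.sqrt (1 - ∑ j', x (Sum.inl j') ^ 2)
    set sy := Real.sqrt (1 - ∑ j', y (Sum.inl j') ^ 2)
    have h1 : sx * thetaF d i ε x j - sy * thetaF d i ε y j
        = sx * (thetaF d i ε x j - thetaF d i ε y j) + thetaF d i ε y j * (sx - sy) := by ring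
    rw [h1]
    calc |sx * (thetaF d i ε x j - thetaF d i ε y j) + thetaF d i ε y j * (sx - sy)|
        ≤ |sx * (thetaF d i ε x j - thetaF d i ε y j)| + |thetaF d i ε y j * (sx - sy)| :=
          abs_add_le _ _
      _ ≤ 1 * ((d:ℝ)^2 * t) + 1 * (2 * d * t) := by
          rw [abs_mul, abs_mul]
          apply add_le_add
          · exact mul_le_mul (hs_le x hx1) (hθ_lip j) (abs_nonneg _) zero_le_one
          · exact mul_le_mul (hθ_le j) hs_lip (abs_nonneg _) zero_le_one
      _ = ((d:ℝ)^2 + 2*d) * t := by ring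
  -- final per-coordinate estimate
  have hfinal : ∀ (a b : ℝ), |a| ≤ ((d:ℝ)^2 + 2*d) * t → |b| ≤ t →
      |(a + b) / Real.sqrt 2| ≤ 3 * (d:ℝ)^2 * t := by
    intro a b ha hb
    have hs2 : (1:ℝ) ≤ Real.sqrt 2 := by
      rw [show (1:ℝ) = Real.sqrt 1 from Real.sqrt_one.symm]
      exact Real.sqrt_le_sqrt (by norm_num)
    rw [abs_div, abs_of_nonneg (by linarith : (0:ℝ) ≤ Real.sqrt 2)]
    have h3 : |a + b| ≤ ((d:ℝ)^2 + 2*d + 1) * t := by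
      calc |a + b| ≤ |a| + |b| := abs_add_le _ _
        _ ≤ ((d:ℝ)^2 + 2*d) * t + t := add_le_add ha hb
        _ = ((d:ℝ)^2 + 2*d + 1) * t := by ring
    calc |a + b| / Real.sqrt 2 ≤ |a + b| / 1 := by
          apply div_le_div_of_nonneg_left (abs_nonneg _) one_pos hs2
      _ = |a + b| := div_one _
      _ ≤ ((d:ℝ)^2 + 2*d + 1) * t := h3
      _ ≤ 3 * (d:ℝ)^2 * t := by
          have hdd : (d:ℝ)*2 ≤ (d:ℝ)*(d:ℝ) := mul_le_mul_of_nonneg_left hd2 (by linarith)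
          have hcoef : (0:ℝ) ≤ (2*(d:ℝ)^2 - 2*(d:ℝ) - 1) * t :=
            mul_nonneg (by nlinarith [hdd]) ht
          linarith [hcoef]
  rcases c with j | j
  · show |(Real.sqrt (1 - ∑ j', x (Sum.inl j') ^ 2) * thetaF d i ε x j + x (Sum.inl j)) /
        Real.sqrt 2 - (Real.sqrt (1 - ∑ j', y (Sum.inl j') ^ 2) * thetaF d i ε y j +
          y (Sum.inl j)) / Real.sqrt 2| ≤ 3 * (d:ℝ)^2 * t
    rw [div_sub_div_same]
    have heq : Real.sqrt (1 - ∑ j', x (Sum.inl j') ^ 2) * thetaF d i ε x j + x (Sum.inl j) -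
        (Real.sqrt (1 - ∑ j', y (Sum.inl j') ^ 2) * thetaF d i ε y j + y (Sum.inl j))
        = (Real.sqrt (1 - ∑ j', x (Sum.inl j') ^ 2) * thetaF d i ε x j -
            Real.sqrt (1 - ∑ j', y (Sum.inl j') ^ 2) * thetaF d i ε y j) +
          (x (Sum.inl j) - y (Sum.inl j)) := by ring
    rw [heq]
    exact hfinal _ _ (hprod j) (hcoordl j)
  · show |(Real.sqrt (1 - ∑ j', x (Sum.inl j') ^ 2) * thetaF d i ε x j - x (Sum.inl j)) /
        Real.sqrt 2 - (Real.sqrt (1 - ∑ j', y (Sum.inl j') ^ 2) * thetaF d i ε y j -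
          y (Sum.inl j)) / Real.sqrt 2| ≤ 3 * (d:ℝ)^2 * t
    rw [div_sub_div_same]
    have heq : Real.sqrt (1 - ∑ j', x (Sum.inl j') ^ 2) * thetaF d i ε x j - x (Sum.inl j) -
        (Real.sqrt (1 - ∑ j', y (Sum.inl j') ^ 2) * thetaF d i ε y j - y (Sum.inl j))
        = (Real.sqrt (1 - ∑ j', x (Sum.inl j') ^ 2) * thetaF d i ε x j -
            Real.sqrt (1 - ∑ j', y (Sum.inl j') ^ 2) * thetaF d i ε y j) +
          (y (Sum.inl j) - x (Sum.inl j)) := by ring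
    rw [heq]
    have hb : |y (Sum.inl j) - x (Sum.inl j)| ≤ t := by
      rw [abs_sub_comm]; exact hcoordl j
    exact hfinal _ _ (hprod j) hb

lemma abs_le_of_sq_le_sq'' {a ρ : ℝ} (h : a^2 ≤ ρ^2) (hρ : 0 ≤ ρ) : |a| ≤ ρ := by
  nlinarith [sq_abs a, abs_nonneg a]

lemma band_bound (d : ℕ) (hd : 2 ≤ d) :
    ∃ C : ℝ, 0 < C ∧ ∀ ρ : ℝ, 0 < ρ → ρ ≤ 1 →
      μH[2*(d:ℝ)-1] (Metric.sphere (0 : EuclideanSpace ℝ (Fin d ⊕ Fin d)) 1 ∩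
          {p | ‖projL p - projR p‖ ≤ ρ}) ≤ ENNReal.ofReal (C * ρ ^ d) := by
  classical
  set L : ℝ≥0 := 3 * (d:ℝ≥0)^2 with hLdef
  set K : ℝ≥0 := NNReal.sqrt (Fintype.card (Fin d ⊕ Fin d)) * L with hKdef
  set B : ℝ≥0∞ := (K : ℝ≥0∞) ^ (2*(d:ℝ)-1) * (ENNReal.ofReal 2 ^ d * ENNReal.ofReal 2 ^ (d-1))
    with hBdef
  have hBfin : B ≠ ⊤ := by
    apply ENNReal.mul_ne_top
    · exact ENNReal.rpow_ne_top_of_nonneg (by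
        have : (1:ℝ) ≤ (d:ℝ) := by exact_mod_cast Nat.one_le_of_lt hd
        linarith) ENNReal.coe_ne_top
    · exact ENNReal.mul_ne_top (ENNReal.pow_ne_top ENNReal.ofReal_ne_top)
        (ENNReal.pow_ne_top ENNReal.ofReal_ne_top)
  set EE : ℝ≥0∞ := (d : ℝ≥0∞) * (2 * B) with hEEdef
  have hEfin : EE ≠ ⊤ :=
    ENNReal.mul_ne_top (ENNReal.natCast_ne_top d) (ENNReal.mul_ne_top (by norm_num) hBfin)
  refine ⟨EE.toReal + 1, by positivity, ?_⟩
  intro ρ hρ0 hρ1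
  have hchart : ∀ (i : Fin d) (b : Bool),
      μH[2*(d:ℝ)-1] (chartF d i (if b then (1:ℝ) else -1) '' bandDom d i ρ) ≤
        B * ENNReal.ofReal ρ ^ d := by
    intro i b
    have hε : |if b then (1:ℝ) else -1| = 1 := by cases b <;> simp
    have hci : Fintype.card (Fin d ⊕ {j : Fin d // j ≠ i}) = 2*d - 1 := by
      simp [Fintype.card_sum, Fintype.card_subtype_compl, Fintype.card_subtype_eq]
      omega
    have hcr : ((Fintype.card (Fin d ⊕ {j : Fin d // j ≠ i}) : ℕ) : ℝ) = 2*(d:ℝ) - 1 := by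
      rw [hci, Nat.cast_sub (by omega : 1 ≤ 2*d)]
      push_cast
      ring
    have hmain := chart_measure_le (chartF d i (if b then (1:ℝ) else -1)) (bandDom d i ρ) L
      (chartF_lip d hd i _ hε ρ hρ0 hρ1)
    rw [hcr, ← hKdef] at hmain
    refine hmain.trans ?_
    rw [hBdef]
    have hvol : volume (bandDom d i ρ) ≤ ENNReal.ofReal 2 ^ d * ENNReal.ofReal ρ ^ d *
        ENNReal.ofReal 2 ^ (d-1) := by
      have hsub : bandDom d i ρ ⊆ Set.pi univ
          (Sum.elim (fun _ : Fin d => Icc (-ρ) ρ) (fun _ : {j : Fin d // j ≠ i} => Icc (-1:ℝ) 1)) := by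
        intro x hx c _
        obtain ⟨hx1, hx2⟩ := hx
        rcases c with j | k
        · show x (Sum.inl j) ∈ Icc (-ρ) ρ
          rw [mem_Icc, ← abs_le]
          apply abs_le_of_sq_le_sq'' _ hρ0.le
          calc x (Sum.inl j) ^ 2 ≤ ∑ j', x (Sum.inl j') ^ 2 :=
                Finset.single_le_sum (f := fun j' => x (Sum.inl j') ^ 2)
                  (fun j' _ => sq_nonneg _) (Finset.mem_univ j)
            _ ≤ ρ^2/2 := hx1
            _ ≤ ρ^2 := by nlinarith [sq_nonneg ρ]
        · show x (Sum.inr k) ∈ Icc (-1:ℝ) 1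
          rw [mem_Icc, ← abs_le]
          have hd0 : (0:ℝ) < d := by
            exact_mod_cast Nat.lt_of_lt_of_le Nat.zero_lt_two hd
          have hBd : 1 - 1/(d:ℝ) ≤ 1 := by
            have : (0:ℝ) < 1/d := by positivity
            linarith
          exact coord_bound (x := fun k => x (Sum.inr k)) hBd hx2 k
      have hcards : Fintype.card {j : Fin d // j ≠ i} = d - 1 := by
        simp [Fintype.card_subtype_compl, Fintype.card_subtype_eq]
      calc volume (bandDom d i ρ) ≤ volume (Set.pi univ
          (Sum.elim (fun _ : Fin d => Icc (-ρ) ρ) (fun _ : {j : Fin d // j ≠ i} => Icc (-1:ℝ) 1))) :=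
            measure_mono hsub
        _ = (∏ _j : Fin d, ENNReal.ofReal (2*ρ)) *
            ∏ _k : {j : Fin d // j ≠ i}, ENNReal.ofReal 2 := by
            rw [volume_pi_pi, Fintype.prod_sum_type]
            congr 1
            · apply Finset.prod_congr rfl
              intro j _
              show volume (Icc (-ρ) ρ) = _
              rw [Real.volume_Icc]
              congr 1
              ring
            · apply Finset.prod_congr rfl
              intro k _
              show volume (Icc (-1:ℝ) 1) = _
              rw [Real.volume_Icc]
              norm_num
        _ = ENNReal.ofReal (2*ρ) ^ d * ENNReal.ofReal 2 ^ (d-1) := by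
            rw [Finset.prod_const, Finset.prod_const]
            simp [Finset.card_univ, hcards]
        _ = ENNReal.ofReal 2 ^ d * ENNReal.ofReal ρ ^ d * ENNReal.ofReal 2 ^ (d-1) := by
            rw [ENNReal.ofReal_mul (by norm_num), mul_pow]
    calc (K : ℝ≥0∞) ^ (2*(d:ℝ)-1) * volume (bandDom d i ρ)
        ≤ (K : ℝ≥0∞) ^ (2*(d:ℝ)-1) *
          (ENNReal.ofReal 2 ^ d * ENNReal.ofReal ρ ^ d * ENNReal.ofReal 2 ^ (d-1)) :=
          mul_le_mul_right hvol _
      _ = (K : ℝ≥0∞) ^ (2*(d:ℝ)-1) * (ENNReal.ofReal 2 ^ d * ENNReal.ofReal 2 ^ (d-1)) *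
          ENNReal.ofReal ρ ^ d := by ring
  have hcover := band_subset_charts d hd ρ hρ0 hρ1
  have htotal : μH[2*(d:ℝ)-1] (Metric.sphere (0 : EuclideanSpace ℝ (Fin d ⊕ Fin d)) 1 ∩
      {p | ‖projL p - projR p‖ ≤ ρ}) ≤ EE * ENNReal.ofReal ρ ^ d := by
    calc μH[2*(d:ℝ)-1] (Metric.sphere (0 : EuclideanSpace ℝ (Fin d ⊕ Fin d)) 1 ∩
        {p | ‖projL p - projR p‖ ≤ ρ})
        ≤ μH[2*(d:ℝ)-1] (⋃ (i : Fin d) (b : Bool),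
            chartF d i (if b then (1:ℝ) else -1) '' bandDom d i ρ) := measure_mono hcover
      _ ≤ ∑' i : Fin d, μH[2*(d:ℝ)-1] (⋃ b : Bool,
            chartF d i (if b then (1:ℝ) else -1) '' bandDom d i ρ) := measure_iUnion_le _
      _ ≤ ∑' i : Fin d, ∑' b : Bool, μH[2*(d:ℝ)-1]
            (chartF d i (if b then (1:ℝ) else -1) '' bandDom d i ρ) :=
          ENNReal.tsum_le_tsum fun i => measure_iUnion_le _
      _ ≤ ∑' _i : Fin d, ∑' _b : Bool, B * ENNReal.ofReal ρ ^ d :=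
          ENNReal.tsum_le_tsum fun i => ENNReal.tsum_le_tsum fun b => hchart i b
      _ = (d : ℝ≥0∞) * (2 * (B * ENNReal.ofReal ρ ^ d)) := by
          simp [tsum_fintype, Finset.sum_const, Finset.card_univ]
      _ = EE * ENNReal.ofReal ρ ^ d := by rw [hEEdef]; ring
  refine htotal.trans ?_
  have h1 : ENNReal.ofReal ρ ^ d = ENNReal.ofReal (ρ ^ d) := (ENNReal.ofReal_pow hρ0.le d).symm
  have h2 : EE ≤ ENNReal.ofReal (EE.toReal + 1) := by
    calc EE = ENNReal.ofReal EE.toReal := (ENNReal.ofReal_toReal hEfin).symm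
      _ ≤ ENNReal.ofReal (EE.toReal + 1) := ENNReal.ofReal_le_ofReal (by linarith)
  calc EE * ENNReal.ofReal ρ ^ d ≤ ENNReal.ofReal (EE.toReal + 1) * ENNReal.ofReal (ρ ^ d) := by
        rw [← h1]; exact mul_le_mul_left h2 _
    _ = ENNReal.ofReal ((EE.toReal + 1) * ρ ^ d) :=
        (ENNReal.ofReal_mul (by positivity)).symm

theorem stmt_6 (d : ℕ) (hd : 2 ≤ d) :
    ∃ C > 0, ∀ ρ : ℝ, 0 < ρ →
      μH[2 * (d : ℝ) - 1] (Metric.sphere (0 : EuclideanSpace ℝ (Fin d ⊕ Fin d)) 1 ∩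
            {p | ‖projL p - projR p‖ ≤ ρ})
          ≤ ENNReal.ofReal (C * min 1 (ρ ^ (((d : ℝ) - 1) / 2))) := by
  classical
  have hd1 : (1:ℝ) ≤ (d:ℝ) := by exact_mod_cast Nat.one_le_of_lt hd
  have hd2 : (2:ℝ) ≤ (d:ℝ) := by exact_mod_cast hd
  have hγ0 : (0:ℝ) ≤ ((d:ℝ) - 1) / 2 := by linarith
  obtain ⟨CB, hCB0, hCB⟩ := band_bound d hd
  have hne : Nonempty (Fin d ⊕ Fin d) := ⟨Sum.inl ⟨0, by omega⟩⟩
  obtain ⟨M, hMfin, hM⟩ := sphere_measure_fin (κ := Fin d ⊕ Fin d)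
  have hcard : ((Fintype.card (Fin d ⊕ Fin d) - 1 : ℕ) : ℝ) = 2*(d:ℝ) - 1 := by
    have h1 : Fintype.card (Fin d ⊕ Fin d) = 2 * d := by
      simp [Fintype.card_sum]; omega
    rw [h1, Nat.cast_sub (by omega : 1 ≤ 2*d)]
    push_cast
    ring
  rw [hcard] at hM
  set CA : ℝ := M.toReal + 1 with hCA
  have hCA0 : 0 < CA := by positivity
  refine ⟨CA + CB, by positivity, ?_⟩
  intro ρ hρ0
  by_cases hρ1 : ρ ≤ 1
  · have hmin : min 1 (ρ ^ (((d:ℝ) - 1) / 2)) = ρ ^ (((d:ℝ) - 1) / 2) :=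
      min_eq_right (Real.rpow_le_one hρ0.le hρ1 hγ0)
    rw [hmin]
    refine (hCB ρ hρ0 hρ1).trans (ENNReal.ofReal_le_ofReal ?_)
    have h1 : ρ ^ d = ρ ^ ((d:ℕ) : ℝ) := (Real.rpow_natCast ρ d).symm
    have h2 : ρ ^ ((d:ℕ) : ℝ) ≤ ρ ^ (((d:ℝ) - 1) / 2) :=
      Real.rpow_le_rpow_of_exponent_ge hρ0 hρ1 (by linarith)
    have h3 : ρ ^ d ≤ ρ ^ (((d:ℝ) - 1) / 2) := by rw [h1]; exact h2
    have h4 : (0:ℝ) ≤ ρ ^ (((d:ℝ) - 1) / 2) := Real.rpow_nonneg hρ0.le _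
    nlinarith [h3, h4, hCB0.le, hCA0.le, pow_nonneg hρ0.le d]
  · push_neg at hρ1
    have hmin : min 1 (ρ ^ (((d:ℝ) - 1) / 2)) = 1 :=
      min_eq_left (Real.one_le_rpow hρ1.le hγ0)
    rw [hmin]
    calc μH[2*(d:ℝ)-1] (Metric.sphere (0 : EuclideanSpace ℝ (Fin d ⊕ Fin d)) 1 ∩
          {p | ‖projL p - projR p‖ ≤ ρ})
        ≤ μH[2*(d:ℝ)-1] (Metric.sphere (0 : EuclideanSpace ℝ (Fin d ⊕ Fin d)) 1) :=
          measure_mono Set.inter_subset_left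
      _ ≤ M := hM
      _ ≤ ENNReal.ofReal ((CA + CB) * 1) := by
          rw [mul_one]
          calc M = ENNReal.ofReal M.toReal := (ENNReal.ofReal_toReal hMfin).symm
            _ ≤ ENNReal.ofReal (CA + CB) := ENNReal.ofReal_le_ofReal (by
                rw [hCA]; linarith)
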